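/- Let U₁ = [[1,0,0,18],[0,1,0,0],[0,0,1,0],[0,0,0,1]], U₂ = [[1,0,18,0],[0,1,0,18],[0,0,1,0],[0,0,0,1]], U₃ = [[1,18,0,0],[0,1,0,0],[0,0,1,-18],[0,0,0,1]], U₄ = [[1,0,0,0],[0,1,-18,0],[0,0,1,0],[0,0,0,1]]. The subgroup of GL(4,ℤ) generated by U₁, U₂, U₃, U₄ has finite index in the group U(ℤ) of all upper unitriangular integer matrices of the form [[1,p,q,r],[0,1,s,q−ps],[0,0,1,−p],[0,0,0,1]] (unipotent upper triangular symplectic matrices for the standard symplectic form preserved by all four Uᵢ). -/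

import Mathlib

open Matrix

private lemma det_aux (p q r s : ℤ) :
    (!![1, p, q, r; 0, 1, s, q - p * s; 0, 0, 1, -p; 0, 0, 0, 1] :
      Matrix (Fin 4) (Fin 4) ℤ).det = 1 := by
  simp [Matrix.det_succ_row_zero, Fin.sum_univ_succ]

def U1 : Matrix.SpecialLinearGroup (Fin 4) ℤ :=
  ⟨!![1, 0, 0, 18; 0, 1, 0, 0; 0, 0, 1, 0; 0, 0, 0, 1], by
    have := det_aux 0 0 18 0; simpa using this⟩

def U2 : Matrix.SpecialLinearGroup (Fin 4) ℤ :=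
  ⟨!![1, 0, 18, 0; 0, 1, 0, 18; 0, 0, 1, 0; 0, 0, 0, 1], by
    have := det_aux 0 18 0 0; simpa using this⟩

def U3 : Matrix.SpecialLinearGroup (Fin 4) ℤ :=
  ⟨!![1, 18, 0, 0; 0, 1, 0, 0; 0, 0, 1, -18; 0, 0, 0, 1], by
    have := det_aux 18 0 0 0; simpa using this⟩

def U4 : Matrix.SpecialLinearGroup (Fin 4) ℤ :=
  ⟨!![1, 0, 0, 0; 0, 1, -18, 0; 0, 0, 1, 0; 0, 0, 0, 1], by
    have := det_aux 0 0 0 (-18); simpa using this⟩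

def UZ : Subgroup (Matrix.SpecialLinearGroup (Fin 4) ℤ) :=
  Subgroup.closure {M | ∃ p q r s : ℤ,
    (M : Matrix (Fin 4) (Fin 4) ℤ) = !![1, p, q, r; 0, 1, s, q - p * s; 0, 0, 1, -p; 0, 0, 0, 1]}

/-- auxiliary packaging of the unipotent matrices as elements of SL(4,ℤ) -/
def mk' (p q r s : ℤ) : Matrix.SpecialLinearGroup (Fin 4) ℤ :=
  ⟨!![1, p, q, r; 0, 1, s, q - p * s; 0, 0, 1, -p; 0, 0, 0, 1], det_aux p q r s⟩

lemma mk'_eq {p q r s p' q' r' s' : ℤ} (h1 : p = p') (h2 : q = q') (h3 : r = r')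
    (h4 : s = s') : mk' p q r s = mk' p' q' r' s' := by subst h1 h2 h3 h4; rfl

lemma mk'_one : mk' 0 0 0 0 = 1 := by
  apply Subtype.ext
  ext i j
  fin_cases i <;> fin_cases j <;>
    norm_num [mk', Matrix.one_apply, Matrix.vecHead, Matrix.vecTail] <;> decide

lemma mk'_mul (p q r s p' q' r' s' : ℤ) :
    mk' p q r s * mk' p' q' r' s' =
      mk' (p + p') (q + q' + p * s') (r + r' + p * q' - p * p' * s' - q * p') (s + s') := by
  apply Subtype.ext
  show (mk' p q r s : Matrix (Fin 4) (Fin 4) ℤ) * (mk' p' q' r' s') = _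
  ext i j
  fin_cases i <;> fin_cases j <;>
    simp [mk', Matrix.mul_apply, Fin.sum_univ_four, Matrix.vecHead, Matrix.vecTail] <;> ring

lemma mk'_inv (p q r s : ℤ) : (mk' p q r s)⁻¹ = mk' (-p) (p * s - q) (-r) (-s) := by
  symm
  apply eq_inv_of_mul_eq_one_left
  rw [mk'_mul, ← mk'_one]
  apply mk'_eq <;> ring

lemma oneParam {G : Type*} [Group G] (H : Subgroup G) (u : G) (hu : u ∈ H) (f : ℤ → G)
    (h0 : f 0 = 1) (hstep : ∀ a : ℤ, f (a + 1) = f a * u) : ∀ a : ℤ, f a ∈ H := by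
  intro a
  induction a using Int.induction_on with
  | zero => rw [h0]; exact H.one_mem
  | succ n ih => rw [hstep]; exact H.mul_mem ih hu
  | pred n ih =>
    have h := hstep (-(n : ℤ) - 1)
    rw [sub_add_cancel] at h
    have : f (-(n : ℤ) - 1) = f (-(n : ℤ)) * u⁻¹ := by
      rw [h]; group
    rw [this]
    exact H.mul_mem ih (H.inv_mem hu)

lemma U1_eq : U1 = mk' 0 0 18 0 := by
  apply Subtype.ext; ext i j; fin_cases i <;> fin_cases j <;> simp [U1, mk']

lemma U2_eq : U2 = mk' 0 18 0 0 := by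
  apply Subtype.ext; ext i j; fin_cases i <;> fin_cases j <;> simp [U2, mk']

lemma U3_eq : U3 = mk' 18 0 0 0 := by
  apply Subtype.ext; ext i j; fin_cases i <;> fin_cases j <;> simp [U3, mk']

lemma U4_eq : U4 = mk' 0 0 0 (-18) := by
  apply Subtype.ext; ext i j; fin_cases i <;> fin_cases j <;> simp [U4, mk']

abbrev Hgen : Subgroup (Matrix.SpecialLinearGroup (Fin 4) ℤ) :=
  Subgroup.closure {U1, U2, U3, U4}

lemma memH_U1 : U1 ∈ Hgen := Subgroup.subset_closure (by simp)
lemma memH_U2 : U2 ∈ Hgen := Subgroup.subset_closure (by simp)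
lemma memH_U3 : U3 ∈ Hgen := Subgroup.subset_closure (by simp)
lemma memH_U4 : U4 ∈ Hgen := Subgroup.subset_closure (by simp)

lemma mem_p (a : ℤ) : mk' (18 * a) 0 0 0 ∈ Hgen := by
  refine oneParam Hgen U3 memH_U3 (fun a => mk' (18 * a) 0 0 0) ?_ ?_ a
  · show mk' _ _ _ _ = 1
    rw [show (18 : ℤ) * 0 = 0 by ring, mk'_one]
  · intro a; rw [U3_eq, mk'_mul]; apply mk'_eq <;> ring

lemma mem_q (a : ℤ) : mk' 0 (18 * a) 0 0 ∈ Hgen := by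
  refine oneParam Hgen U2 memH_U2 (fun a => mk' 0 (18 * a) 0 0) ?_ ?_ a
  · show mk' _ _ _ _ = 1
    rw [show (18 : ℤ) * 0 = 0 by ring, mk'_one]
  · intro a; rw [U2_eq, mk'_mul]; apply mk'_eq <;> ring

lemma mem_r (a : ℤ) : mk' 0 0 (18 * a) 0 ∈ Hgen := by
  refine oneParam Hgen U1 memH_U1 (fun a => mk' 0 0 (18 * a) 0) ?_ ?_ a
  · show mk' _ _ _ _ = 1
    rw [show (18 : ℤ) * 0 = 0 by ring, mk'_one]
  · intro a; rw [U1_eq, mk'_mul]; apply mk'_eq <;> ring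

lemma mem_s (a : ℤ) : mk' 0 0 0 (-18 * a) ∈ Hgen := by
  refine oneParam Hgen U4 memH_U4 (fun a => mk' 0 0 0 (-18 * a)) ?_ ?_ a
  · show mk' _ _ _ _ = 1
    rw [show (-18 : ℤ) * 0 = 0 by ring, mk'_one]
  · intro a; rw [U4_eq, mk'_mul]; apply mk'_eq <;> ring

/-- every unipotent matrix with all parameters divisible by 18 is in the generated group -/
lemma mem_of_dvd (a b c e : ℤ) : mk' (18 * a) (18 * b) (18 * c) (18 * e) ∈ Hgen := by
  have key : mk' (18 * a) (18 * b) (18 * c) (18 * e) =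
      mk' (18 * a) 0 0 0 * mk' 0 (18 * (b - 18 * a * e)) 0 0 *
        mk' 0 0 (18 * (c - 18 * a * (b - 18 * a * e))) 0 * mk' 0 0 0 (-18 * (-e)) := by
    rw [mk'_mul, mk'_mul, mk'_mul]; apply mk'_eq <;> ring
  rw [key]
  exact Hgen.mul_mem (Hgen.mul_mem (Hgen.mul_mem (mem_p a) (mem_q _)) (mem_r _)) (mem_s _)

/-- the subgroup of all unipotent matrices mk' p q r s -/
def W : Subgroup (Matrix.SpecialLinearGroup (Fin 4) ℤ) where
  carrier := {M | ∃ p q r s : ℤ, M = mk' p q r s}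
  one_mem' := ⟨0, 0, 0, 0, mk'_one.symm⟩
  mul_mem' := by
    rintro _ _ ⟨p, q, r, s, rfl⟩ ⟨p', q', r', s', rfl⟩
    exact ⟨_, _, _, _, (mk'_mul p q r s p' q' r' s')⟩
  inv_mem' := by
    rintro _ ⟨p, q, r, s, rfl⟩
    exact ⟨_, _, _, _, mk'_inv p q r s⟩

lemma UZ_le_W : UZ ≤ W := by
  rw [UZ, Subgroup.closure_le]
  rintro M ⟨p, q, r, s, hM⟩
  exact ⟨p, q, r, s, Subtype.ext hM⟩

theorem unipotent_finite_index :
    (Subgroup.closure {U1, U2, U3, U4}).relIndex UZ ≠ 0 := by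
  set φ : Matrix.SpecialLinearGroup (Fin 4) ℤ →* Matrix.SpecialLinearGroup (Fin 4) (ZMod 18) :=
    Matrix.SpecialLinearGroup.map (Int.castRingHom (ZMod 18)) with hφ
  have hker : φ.ker ⊓ UZ ≤ Hgen := by
    rintro M ⟨hk, hu⟩
    obtain ⟨p, q, r, s, rfl⟩ := UZ_le_W hu
    have hmat : ((mk' p q r s : Matrix (Fin 4) (Fin 4) ℤ)).map (Int.cast : ℤ → ZMod 18)
        = (1 : Matrix (Fin 4) (Fin 4) (ZMod 18)) := by
      have : φ (mk' p q r s) = 1 := hk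
      exact congrArg Subtype.val this
    have hp : ((p : ℤ) : ZMod 18) = 0 := by
      have := congrFun (congrFun hmat 0) 1
      simpa [mk', Matrix.one_apply] using this
    have hq : ((q : ℤ) : ZMod 18) = 0 := by
      have := congrFun (congrFun hmat 0) 2
      simpa [mk', Matrix.one_apply] using this
    have hr : ((r : ℤ) : ZMod 18) = 0 := by
      have := congrFun (congrFun hmat 0) 3
      simpa [mk', Matrix.one_apply] using this
    have hs : ((s : ℤ) : ZMod 18) = 0 := by
      have := congrFun (congrFun hmat 1) 2
      simpa [mk', Matrix.one_apply] using this
    rw [ZMod.intCast_zmod_eq_zero_iff_dvd] at hp hq hr hs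
    obtain ⟨a, rfl⟩ := hp; obtain ⟨b, rfl⟩ := hq
    obtain ⟨c, rfl⟩ := hr; obtain ⟨e, rfl⟩ := hs
    exact mem_of_dvd a b c e
  have h1 : φ.ker.relIndex UZ ≠ 0 := by
    have : (φ.ker.subgroupOf UZ).FiniteIndex := inferInstance
    exact this.index_ne_zero
  have h2 : Hgen.relIndex UZ ∣ (φ.ker ⊓ UZ).relIndex UZ :=
    Subgroup.relIndex_dvd_of_le_left UZ hker
  rw [Subgroup.inf_relIndex_right] at h2
  intro h0
  rw [h0] at h2
  exact h1 (eq_zero_of_zero_dvd h2)
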